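/- As p decreases to p_c, (1 − q_p)·f_p''(q_p)/(p − p_c) converges to 2m₁; that is, the backbone generating function f̂_p(s) = (f_p((1−q_p)s + q_p) − q_p)/(1 − q_p) satisfies f̂_p''(0) = (1 − q_p) f_p''(q_p) = 2m₁(p − p_c)(1 + o(1)). -/

import Mathlib

open Filter Set Topology
open scoped Topology

/-- The probability generating function `f(s) = ∑ₖ aₖ sᵏ` of a distribution `a` on ℕ. -/
noncomputable def pgf (a : ℕ → ℝ) (s : ℝ) : ℝ := ∑' n, a n * s ^ n

/-- The generating function `f_p(s) = f(ps + 1 - p)` of the binomially `p`-thinned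
(percolated) offspring distribution. -/
noncomputable def pgfp (a : ℕ → ℝ) (p s : ℝ) : ℝ := pgf a (p * s + 1 - p)

/-- The backbone generating function `f̂_p(s) = (f_p((1-q)s + q) - q)/(1 - q)`,
where `q = q_p` is the extinction probability. -/
noncomputable def pgfhat (a : ℕ → ℝ) (p q s : ℝ) : ℝ :=
  (pgfp a p ((1 - q) * s + q) - q) / (1 - q)

noncomputable def pgfD1 (a : ℕ → ℝ) (x : ℝ) : ℝ := ∑' n, a n * ((n : ℝ) * x ^ (n - 1))

noncomputable def pgfD2 (a : ℕ → ℝ) (x : ℝ) : ℝ :=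
  ∑' n, a n * ((n : ℝ) * (((n - 1 : ℕ)) : ℝ) * x ^ (n - 1 - 1))

lemma kk1 (k : ℕ) : 0 ≤ (k : ℝ) * ((k : ℝ) - 1) := by
  rcases Nat.eq_zero_or_pos k with h | h
  · simp [h]
  · have : (1 : ℝ) ≤ k := by exact_mod_cast h
    nlinarith

lemma kk2 (k : ℕ) : 0 ≤ (k : ℝ) * ((k : ℝ) - 1) * ((k : ℝ) - 2) := by
  match k with
  | 0 => norm_num
  | 1 => norm_num
  | (n + 2) =>
    push_cast
    have h : (0:ℝ) ≤ (n:ℝ) := n.cast_nonneg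
    nlinarith [mul_nonneg (mul_nonneg h h) h, mul_nonneg h h]

lemma pow_bounds {t : ℝ} (h0 : 0 ≤ t) (h1 : t ≤ 1) (k : ℕ) :
    1 - t ^ k ≤ (k : ℝ) * (1 - t) ∧
    t ^ k ≤ 1 - (k : ℝ) * (1 - t) + (k : ℝ) * ((k : ℝ) - 1) / 2 * (1 - t) ^ 2 ∧
    1 - (k : ℝ) * (1 - t) + (k : ℝ) * ((k : ℝ) - 1) / 2 * (1 - t) ^ 2
      - (k : ℝ) * ((k : ℝ) - 1) * ((k : ℝ) - 2) / 6 * (1 - t) ^ 3 ≤ t ^ k := by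
  induction k with
  | zero => norm_num
  | succ k ih =>
    obtain ⟨ih1, ih2, ih3⟩ := ih
    have hu : (0 : ℝ) ≤ 1 - t := by linarith
    have hpk1 : t ^ k ≤ 1 := pow_le_one₀ h0 h1
    have hpk0 : (0 : ℝ) ≤ t ^ k := pow_nonneg h0 k
    have hmul2 := mul_le_mul_of_nonneg_left ih2 h0
    have hmul3 := mul_le_mul_of_nonneg_left ih3 h0
    have hk1 := kk1 k
    have hk2 := kk2 k
    refine ⟨?_, ?_, ?_⟩
    · rw [pow_succ t k]
      push_cast
      have h := mul_le_mul_of_nonneg_right hpk1 hu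
      have hid1 : t ^ k * (1 - t) = t ^ k - t ^ k * t := by ring
      linarith
    · rw [pow_succ t k]
      push_cast
      have hid2 : t * (1 - (k : ℝ) * (1 - t) + (k : ℝ) * ((k : ℝ) - 1) / 2 * (1 - t) ^ 2)
          = (1 - ((k : ℝ) + 1) * (1 - t) + ((k : ℝ) + 1) * (((k : ℝ) + 1) - 1) / 2 * (1 - t) ^ 2)
            - (k : ℝ) * ((k : ℝ) - 1) / 2 * (1 - t) ^ 3 := by ring
      have h3 := mul_nonneg hk1 (pow_nonneg hu 3)
      linarith
    · rw [pow_succ t k]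
      push_cast
      have hid3 : t * (1 - (k : ℝ) * (1 - t) + (k : ℝ) * ((k : ℝ) - 1) / 2 * (1 - t) ^ 2
            - (k : ℝ) * ((k : ℝ) - 1) * ((k : ℝ) - 2) / 6 * (1 - t) ^ 3)
          = (1 - ((k : ℝ) + 1) * (1 - t) + ((k : ℝ) + 1) * (((k : ℝ) + 1) - 1) / 2 * (1 - t) ^ 2
              - ((k : ℝ) + 1) * (((k : ℝ) + 1) - 1) * (((k : ℝ) + 1) - 2) / 6 * (1 - t) ^ 3)
            + (k : ℝ) * ((k : ℝ) - 1) * ((k : ℝ) - 2) / 6 * (1 - t) ^ 4 := by ring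
      have h4 := mul_nonneg hk2 (pow_nonneg hu 4)
      linarith

lemma hasDerivAt_affine (c d x : ℝ) : HasDerivAt (fun y => c * y + d) c x := by
  simpa using ((hasDerivAt_id x).const_mul c).add_const d

lemma comp_affine {g : ℝ → ℝ} {g' : ℝ} {c d x : ℝ} (h : HasDerivAt g g' (c * x + d)) :
    HasDerivAt (fun y => g (c * y + d)) (c * g') x := by
  rw [mul_comm]; exact h.comp x (hasDerivAt_affine c d x)

section derivs
variable {a : ℕ → ℝ}

lemma summable_pow (ha0 : ∀ k, 0 ≤ a k) (Sa : Summable a) {x : ℝ} (hx : |x| ≤ 1) :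
    Summable fun n => a n * x ^ n := by
  refine Summable.of_norm_bounded Sa fun n => ?_
  rw [norm_mul, norm_pow, Real.norm_eq_abs, Real.norm_eq_abs, abs_of_nonneg (ha0 n)]
  have h1 : |x| ^ n ≤ 1 := pow_le_one₀ (abs_nonneg x) hx
  nlinarith [ha0 n, pow_nonneg (abs_nonneg x) n]

lemma summable_pow1 (ha0 : ∀ k, 0 ≤ a k) (S1 : Summable fun n : ℕ => (n : ℝ) * a n)
    {x : ℝ} (hx : |x| ≤ 1) : Summable fun n => a n * ((n : ℝ) * x ^ (n - 1)) := by
  refine Summable.of_norm_bounded S1 fun n => ?_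
  rw [norm_mul, norm_mul, norm_pow, Real.norm_eq_abs, Real.norm_eq_abs, Real.norm_eq_abs,
    abs_of_nonneg (ha0 n), abs_of_nonneg (Nat.cast_nonneg n)]
  have h1 : |x| ^ (n - 1) ≤ 1 := pow_le_one₀ (abs_nonneg x) hx
  nlinarith [ha0 n, Nat.cast_nonneg (α := ℝ) n, pow_nonneg (abs_nonneg x) (n - 1),
    mul_nonneg (Nat.cast_nonneg (α := ℝ) n) (ha0 n)]

lemma cast_pred_le (n : ℕ) : (((n - 1 : ℕ)) : ℝ) ≤ (n : ℝ) - 1 ∨ ((n : ℝ) * (((n - 1 : ℕ)) : ℝ) = (n : ℝ) * ((n : ℝ) - 1)) := by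
  match n with
  | 0 => right; simp
  | (m + 1) => right; push_cast [Nat.succ_sub_one]; ring

lemma coeff2_eq (n : ℕ) : (n : ℝ) * (((n - 1 : ℕ)) : ℝ) = (n : ℝ) * ((n : ℝ) - 1) := by
  match n with
  | 0 => simp
  | (m + 1) => push_cast [Nat.succ_sub_one]; ring

lemma summable_pow2 (ha0 : ∀ k, 0 ≤ a k) (S2 : Summable fun n : ℕ => (n : ℝ) * ((n : ℝ) - 1) * a n)
    {x : ℝ} (hx : |x| ≤ 1) :
    Summable fun n => a n * ((n : ℝ) * (((n - 1 : ℕ)) : ℝ) * x ^ (n - 1 - 1)) := by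
  refine Summable.of_norm_bounded S2 fun n => ?_
  rw [norm_mul, norm_mul, norm_pow, Real.norm_eq_abs, Real.norm_eq_abs, Real.norm_eq_abs,
    abs_of_nonneg (ha0 n), abs_of_nonneg (mul_nonneg (Nat.cast_nonneg n) (Nat.cast_nonneg _))]
  have h1 : |x| ^ (n - 1 - 1) ≤ 1 := pow_le_one₀ (abs_nonneg x) hx
  rw [coeff2_eq n]
  have hc := kk1 n
  nlinarith [ha0 n, pow_nonneg (abs_nonneg x) (n - 1 - 1), mul_nonneg hc (ha0 n)]

lemma hasDerivAt_pgf (ha0 : ∀ k, 0 ≤ a k) (Sa : Summable a)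
    (S1 : Summable fun n : ℕ => (n : ℝ) * a n)
    {x : ℝ} (hx : x ∈ Ioo (-1 : ℝ) 1) : HasDerivAt (pgf a) (pgfD1 a x) x := by
  have habs : ∀ y ∈ Ioo (-1 : ℝ) 1, |y| ≤ 1 := fun y hy => le_of_lt (abs_lt.2 ⟨hy.1, hy.2⟩)
  refine hasDerivAt_of_tendstoUniformlyOn isOpen_Ioo
    (tendstoUniformlyOn_tsum (f := fun (n : ℕ) (y : ℝ) => a n * ((n : ℝ) * y ^ (n - 1)))
      (u := fun (n : ℕ) => (n : ℝ) * a n) S1 ?_)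
    (Filter.Eventually.of_forall fun t y hy =>
      HasDerivAt.sum fun n _ => (hasDerivAt_pow n y).const_mul (a n)) ?_ hx
  · intro n y hy
    rw [norm_mul, norm_mul, norm_pow, Real.norm_eq_abs, Real.norm_eq_abs, Real.norm_eq_abs,
      abs_of_nonneg (ha0 n), abs_of_nonneg (Nat.cast_nonneg n)]
    have h1 : |y| ^ (n - 1) ≤ 1 := pow_le_one₀ (abs_nonneg y) (habs y hy)
    beta_reduce
    nlinarith [mul_nonneg (mul_nonneg (Nat.cast_nonneg (α := ℝ) n) (ha0 n)) (sub_nonneg.2 h1),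
      ha0 n, pow_nonneg (abs_nonneg y) (n - 1),
      mul_nonneg (Nat.cast_nonneg (α := ℝ) n) (ha0 n)]
  · intro y hy
    have h := (summable_pow ha0 Sa (habs y hy)).hasSum
    simp only [Finset.sum_apply]
    exact h

lemma hasDerivAt_pgfD1 (ha0 : ∀ k, 0 ≤ a k)
    (S1 : Summable fun n : ℕ => (n : ℝ) * a n)
    (S2 : Summable fun n : ℕ => (n : ℝ) * ((n : ℝ) - 1) * a n)
    {x : ℝ} (hx : x ∈ Ioo (-1 : ℝ) 1) : HasDerivAt (pgfD1 a) (pgfD2 a x) x := by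
  have habs : ∀ y ∈ Ioo (-1 : ℝ) 1, |y| ≤ 1 := fun y hy => le_of_lt (abs_lt.2 ⟨hy.1, hy.2⟩)
  have hterm : ∀ (t : Finset ℕ) (y : ℝ), y ∈ Ioo (-1 : ℝ) 1 →
      HasDerivAt (fun z => ∑ n ∈ t, a n * ((n : ℝ) * z ^ (n - 1)))
        (∑ n ∈ t, a n * ((n : ℝ) * (((n - 1 : ℕ)) : ℝ) * y ^ (n - 1 - 1))) y := by
    intro t y _
    refine HasDerivAt.fun_sum fun n _ => ?_
    have h := (hasDerivAt_pow (n - 1) y).const_mul (a n * (n : ℝ))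
    have hfun : (fun z : ℝ => a n * ((n : ℝ) * z ^ (n - 1)))
        = fun z => a n * (n : ℝ) * z ^ (n - 1) := by funext z; ring
    rw [hfun]
    rw [show a n * ((n : ℝ) * (((n - 1 : ℕ)) : ℝ) * y ^ (n - 1 - 1))
      = a n * (n : ℝ) * ((((n - 1 : ℕ)) : ℝ) * y ^ (n - 1 - 1)) by ring]
    exact h
  refine hasDerivAt_of_tendstoUniformlyOn isOpen_Ioo
    (tendstoUniformlyOn_tsum
      (f := fun (n : ℕ) (y : ℝ) => a n * ((n : ℝ) * (((n - 1 : ℕ)) : ℝ) * y ^ (n - 1 - 1)))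
      (u := fun (n : ℕ) => (n : ℝ) * ((n : ℝ) - 1) * a n) S2 ?_)
    (Filter.Eventually.of_forall hterm) ?_ hx
  · intro n y hy
    rw [norm_mul, norm_mul, norm_pow, Real.norm_eq_abs, Real.norm_eq_abs, Real.norm_eq_abs,
      abs_of_nonneg (ha0 n), abs_of_nonneg (mul_nonneg (Nat.cast_nonneg n) (Nat.cast_nonneg _))]
    have h1 : |y| ^ (n - 1 - 1) ≤ 1 := pow_le_one₀ (abs_nonneg y) (habs y hy)
    rw [coeff2_eq n]
    beta_reduce
    nlinarith [mul_nonneg (mul_nonneg (kk1 n) (ha0 n)) (sub_nonneg.2 h1), ha0 n,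
      pow_nonneg (abs_nonneg y) (n - 1 - 1), mul_nonneg (kk1 n) (ha0 n)]
  · intro y hy
    have h := (summable_pow1 ha0 S1 (habs y hy)).hasSum
    exact h

lemma hasSum_one_sub (ha0 : ∀ k, 0 ≤ a k) (ha1 : HasSum a 1) {t : ℝ} (h0 : 0 ≤ t) (h1 : t ≤ 1) :
    HasSum (fun k => a k * (1 - t ^ k)) (1 - pgf a t) := by
  have hs : Summable fun k => a k * t ^ k :=
    summable_pow ha0 ha1.summable (by rw [abs_of_nonneg h0]; exact h1)
  have h := ha1.sub hs.hasSum
  have hfun : (fun k => a k - a k * t ^ k) = fun k => a k * (1 - t ^ k) := by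
    funext k; ring
  rw [hfun] at h
  exact h

lemma taylor_low (ha0 : ∀ k, 0 ≤ a k) (ha1 : HasSum a 1)
    (hm1 : HasSum (fun k : ℕ => (k : ℝ) * a k) m₁)
    (hm2 : HasSum (fun k : ℕ => (k : ℝ) * ((k : ℝ) - 1) * a k) m₂)
    {t : ℝ} (h0 : 0 ≤ t) (h1 : t ≤ 1) :
    m₁ * (1 - t) - m₂ / 2 * (1 - t) ^ 2 ≤ 1 - pgf a t := by
  have hcomp : HasSum (fun k : ℕ => a k * ((k : ℝ) * (1 - t) - (k : ℝ) * ((k : ℝ) - 1) / 2 * (1 - t) ^ 2))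
      (m₁ * (1 - t) - m₂ / 2 * (1 - t) ^ 2) := by
    have h := (hm1.mul_right (1 - t)).sub (hm2.mul_right ((1 - t) ^ 2 / 2))
    have hfun : (fun k : ℕ => (k : ℝ) * a k * (1 - t) - (k : ℝ) * ((k : ℝ) - 1) * a k * ((1 - t) ^ 2 / 2))
        = fun k : ℕ => a k * ((k : ℝ) * (1 - t) - (k : ℝ) * ((k : ℝ) - 1) / 2 * (1 - t) ^ 2) := by
      funext k; ring
    rw [hfun] at h
    rw [show m₁ * (1 - t) - m₂ / 2 * (1 - t) ^ 2 = m₁ * (1 - t) - m₂ * ((1 - t) ^ 2 / 2) by ring]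
    exact h
  refine hasSum_le (fun k => ?_) hcomp (hasSum_one_sub ha0 ha1 h0 h1)
  have hb := (pow_bounds h0 h1 k).2.1
  have := mul_le_mul_of_nonneg_left (by linarith : (k : ℝ) * (1 - t) - (k : ℝ) * ((k : ℝ) - 1) / 2 * (1 - t) ^ 2 ≤ 1 - t ^ k) (ha0 k)
  linarith

lemma taylor_up (ha0 : ∀ k, 0 ≤ a k) (ha1 : HasSum a 1)
    (hm1 : HasSum (fun k : ℕ => (k : ℝ) * a k) m₁)
    (hm2 : HasSum (fun k : ℕ => (k : ℝ) * ((k : ℝ) - 1) * a k) m₂)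
    (hm3 : HasSum (fun k : ℕ => (k : ℝ) * ((k : ℝ) - 1) * ((k : ℝ) - 2) * a k) m₃)
    {t : ℝ} (h0 : 0 ≤ t) (h1 : t ≤ 1) :
    1 - pgf a t ≤ m₁ * (1 - t) - m₂ / 2 * (1 - t) ^ 2 + m₃ / 6 * (1 - t) ^ 3 := by
  have hcomp : HasSum (fun k : ℕ => a k * ((k : ℝ) * (1 - t) - (k : ℝ) * ((k : ℝ) - 1) / 2 * (1 - t) ^ 2
        + (k : ℝ) * ((k : ℝ) - 1) * ((k : ℝ) - 2) / 6 * (1 - t) ^ 3))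
      (m₁ * (1 - t) - m₂ / 2 * (1 - t) ^ 2 + m₃ / 6 * (1 - t) ^ 3) := by
    have h := ((hm1.mul_right (1 - t)).sub (hm2.mul_right ((1 - t) ^ 2 / 2))).add
      (hm3.mul_right ((1 - t) ^ 3 / 6))
    have hfun : (fun k : ℕ => (k : ℝ) * a k * (1 - t) - (k : ℝ) * ((k : ℝ) - 1) * a k * ((1 - t) ^ 2 / 2)
          + (k : ℝ) * ((k : ℝ) - 1) * ((k : ℝ) - 2) * a k * ((1 - t) ^ 3 / 6))
        = fun k : ℕ => a k * ((k : ℝ) * (1 - t) - (k : ℝ) * ((k : ℝ) - 1) / 2 * (1 - t) ^ 2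
          + (k : ℝ) * ((k : ℝ) - 1) * ((k : ℝ) - 2) / 6 * (1 - t) ^ 3) := by
      funext k; ring
    rw [hfun] at h
    rw [show m₁ * (1 - t) - m₂ / 2 * (1 - t) ^ 2 + m₃ / 6 * (1 - t) ^ 3
      = m₁ * (1 - t) - m₂ * ((1 - t) ^ 2 / 2) + m₃ * ((1 - t) ^ 3 / 6) by ring]
    exact h
  refine hasSum_le (fun k => ?_) (hasSum_one_sub ha0 ha1 h0 h1) hcomp
  have hb := (pow_bounds h0 h1 k).2.2
  have := mul_le_mul_of_nonneg_left (by linarith : (1 : ℝ) - t ^ k ≤ (k : ℝ) * (1 - t) - (k : ℝ) * ((k : ℝ) - 1) / 2 * (1 - t) ^ 2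
    + (k : ℝ) * ((k : ℝ) - 1) * ((k : ℝ) - 2) / 6 * (1 - t) ^ 3) (ha0 k)
  linarith

lemma pgfD2_le (ha0 : ∀ k, 0 ≤ a k)
    (hm2 : HasSum (fun k : ℕ => (k : ℝ) * ((k : ℝ) - 1) * a k) m₂)
    {t : ℝ} (h0 : 0 ≤ t) (h1 : t ≤ 1) :
    pgfD2 a t ≤ m₂ := by
  have hs : Summable fun n => a n * ((n : ℝ) * (((n - 1 : ℕ)) : ℝ) * t ^ (n - 1 - 1)) :=
    summable_pow2 ha0 hm2.summable (by rw [abs_of_nonneg h0]; exact h1)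
  refine hasSum_le (fun k => ?_) hs.hasSum hm2
  rw [show a k * ((k : ℝ) * (((k - 1 : ℕ)) : ℝ) * t ^ (k - 1 - 1))
      = (k : ℝ) * (((k - 1 : ℕ)) : ℝ) * a k * t ^ (k - 1 - 1) from by ring, coeff2_eq k]
  have h2 : t ^ (k - 1 - 1) ≤ 1 := pow_le_one₀ h0 h1
  nlinarith [mul_nonneg (kk1 k) (ha0 k), pow_nonneg h0 (k - 1 - 1)]

lemma pgfD2_ge (ha0 : ∀ k, 0 ≤ a k)
    (hm2 : HasSum (fun k : ℕ => (k : ℝ) * ((k : ℝ) - 1) * a k) m₂)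
    (hm3 : HasSum (fun k : ℕ => (k : ℝ) * ((k : ℝ) - 1) * ((k : ℝ) - 2) * a k) m₃)
    {t : ℝ} (h0 : 0 ≤ t) (h1 : t ≤ 1) :
    m₂ - m₃ * (1 - t) ≤ pgfD2 a t := by
  have hs : Summable fun n => a n * ((n : ℝ) * (((n - 1 : ℕ)) : ℝ) * t ^ (n - 1 - 1)) :=
    summable_pow2 ha0 hm2.summable (by rw [abs_of_nonneg h0]; exact h1)
  have hcomp : HasSum (fun k : ℕ => (k : ℝ) * ((k : ℝ) - 1) * a k
      - (k : ℝ) * ((k : ℝ) - 1) * ((k : ℝ) - 2) * a k * (1 - t)) (m₂ - m₃ * (1 - t)) :=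
    hm2.sub (hm3.mul_right (1 - t))
  refine hasSum_le (fun k => ?_) hcomp hs.hasSum
  rw [show a k * ((k : ℝ) * (((k - 1 : ℕ)) : ℝ) * t ^ (k - 1 - 1))
      = (k : ℝ) * (((k - 1 : ℕ)) : ℝ) * a k * t ^ (k - 1 - 1) from by ring, coeff2_eq k]
  match k with
  | 0 => norm_num
  | 1 => norm_num
  | (m + 2) =>
    have hb := (pow_bounds h0 h1 m).1
    have hcast : ((m + 2 : ℕ) : ℝ) = (m : ℝ) + 2 := by push_cast; ring
    have hsub : (m + 2) - 1 - 1 = m := rfl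
    rw [hsub, hcast]
    have hm0 : (0 : ℝ) ≤ (m : ℝ) := Nat.cast_nonneg m
    -- goal: (m+2)*(m+1)*a - (m+2)*(m+1)*m*a*(1-t) ≤ (m+2)*(m+1)*a*t^m
    -- from 1 - t^m ≤ m(1-t): (m+2)(m+1)a*(1 - t^m) ≤ (m+2)(m+1)a*m*(1-t)
    have hc : (0 : ℝ) ≤ ((m : ℝ) + 2) * ((m : ℝ) + 1) * a (m + 2) :=
      mul_nonneg (mul_nonneg (by linarith) (by linarith)) (ha0 (m + 2))
    nlinarith [mul_le_mul_of_nonneg_left hb hc]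

lemma one_sub_pow_eq (x : ℝ) (k : ℕ) :
    1 - (1 - x) ^ k = x * ∑ j ∈ Finset.range k, (1 - x) ^ j := by
  have h := geom_sum_mul (1 - x) k
  linear_combination h

lemma chord_mono (ha0 : ∀ k, 0 ≤ a k) (ha1 : HasSum a 1)
    {v w : ℝ} (hv : 0 < v) (hvw : v ≤ w) (hw : w ≤ 1) :
    (1 - pgf a (1 - w)) / w ≤ (1 - pgf a (1 - v)) / v := by
  have hw0 : 0 < w := lt_of_lt_of_le hv hvw
  have hW := (hasSum_one_sub ha0 ha1 (by linarith : (0:ℝ) ≤ 1 - w) (by linarith)).div_const w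
  have hV := (hasSum_one_sub ha0 ha1 (by linarith : (0:ℝ) ≤ 1 - v) (by linarith)).div_const v
  refine hasSum_le (fun k => ?_) hW hV
  have hgw : 1 - (1 - w) ^ k = w * ∑ j ∈ Finset.range k, (1 - w) ^ j := by
    simpa using one_sub_pow_eq w k
  have hgv : 1 - (1 - v) ^ k = v * ∑ j ∈ Finset.range k, (1 - v) ^ j := by
    simpa using one_sub_pow_eq v k
  rw [mul_div_assoc, mul_div_assoc, hgw, hgv, mul_div_cancel_left₀ _ (ne_of_gt hw0),
    mul_div_cancel_left₀ _ (ne_of_gt hv)]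
  refine mul_le_mul_of_nonneg_left (Finset.sum_le_sum fun j _ => ?_) (ha0 k)
  exact pow_le_pow_left₀ (by linarith) (by linarith) j

lemma m2_pos (ha0 : ∀ k, 0 ≤ a k) (ha1 : HasSum a 1)
    (hm1 : HasSum (fun k : ℕ => (k : ℝ) * a k) m₁) (h1m : 1 < m₁)
    (hm2 : HasSum (fun k : ℕ => (k : ℝ) * ((k : ℝ) - 1) * a k) m₂) : 0 < m₂ := by
  rcases lt_or_ge 0 m₂ with h | h
  · exact h
  exfalso
  have hnn : ∀ k : ℕ, 0 ≤ (k : ℝ) * ((k : ℝ) - 1) * a k := fun k => mul_nonneg (kk1 k) (ha0 k)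
  have hz : m₂ = 0 := le_antisymm h (hm2.nonneg hnn)
  rw [hz] at hm2
  have hzero : ∀ k : ℕ, (k : ℝ) * ((k : ℝ) - 1) * a k = 0 := by
    intro k
    have := (hasSum_zero_iff_of_nonneg hnn).mp hm2
    exact congrFun this k
  have hak : ∀ k : ℕ, 2 ≤ k → a k = 0 := by
    intro k hk
    have h2 : (2 : ℝ) ≤ (k : ℝ) := by exact_mod_cast hk
    have := hzero k
    have hpos : 0 < (k : ℝ) * ((k : ℝ) - 1) := by nlinarith
    exact (mul_eq_zero.mp this).resolve_left (ne_of_gt hpos)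
  have hm1' : HasSum (fun k : ℕ => (k : ℝ) * a k) (a 1) := by
    have : (fun k : ℕ => (k : ℝ) * a k) = fun k : ℕ => if k = 1 then a 1 else 0 := by
      funext k
      match k with
      | 0 => simp
      | 1 => simp
      | (m + 2) => simp [hak (m + 2) (by omega)]
    rw [this]
    exact hasSum_ite_eq 1 (a 1)
  have hm1eq : m₁ = a 1 := hm1.unique hm1'
  have ha1le : a 1 ≤ 1 := le_hasSum ha1 1 fun i _ => ha0 i
  linarith [hm1eq ▸ h1m]

lemma pgfp_eq (a : ℕ → ℝ) (p : ℝ) : pgfp a p = fun x => pgf a (p * x + (1 - p)) := by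
  funext x
  unfold pgfp
  rw [show p * x + 1 - p = p * x + (1 - p) from by ring]

lemma hasDerivAt_pgfp (ha0 : ∀ k, 0 ≤ a k) (Sa : Summable a)
    (S1 : Summable fun n : ℕ => (n : ℝ) * a n)
    {p x : ℝ} (hx : p * x + (1 - p) ∈ Ioo (-1 : ℝ) 1) :
    HasDerivAt (pgfp a p) (p * pgfD1 a (p * x + (1 - p))) x := by
  rw [pgfp_eq]
  exact comp_affine (hasDerivAt_pgf ha0 Sa S1 hx)

lemma deriv2_pgfp (ha0 : ∀ k, 0 ≤ a k) (Sa : Summable a)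
    (S1 : Summable fun n : ℕ => (n : ℝ) * a n)
    (S2 : Summable fun n : ℕ => (n : ℝ) * ((n : ℝ) - 1) * a n)
    {p x : ℝ} (hx : p * x + (1 - p) ∈ Ioo (-1 : ℝ) 1) :
    deriv (deriv (pgfp a p)) x = p ^ 2 * pgfD2 a (p * x + (1 - p)) := by
  have hcont : Continuous fun y : ℝ => p * y + (1 - p) := by continuity
  have hopen : IsOpen ((fun y : ℝ => p * y + (1 - p)) ⁻¹' Ioo (-1 : ℝ) 1) :=
    isOpen_Ioo.preimage hcont
  have hev : deriv (pgfp a p) =ᶠ[𝓝 x] fun y => p * pgfD1 a (p * y + (1 - p)) := by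
    filter_upwards [hopen.mem_nhds hx] with y hy
    exact (hasDerivAt_pgfp ha0 Sa S1 hy).deriv
  rw [hev.deriv_eq]
  have h2 : HasDerivAt (fun y => p * pgfD1 a (p * y + (1 - p)))
      (p * (p * pgfD2 a (p * x + (1 - p)))) x :=
    HasDerivAt.const_mul p (comp_affine (hasDerivAt_pgfD1 ha0 S1 S2 hx))
  rw [h2.deriv]
  ring

lemma pgfhat_deriv2 (ha0 : ∀ k, 0 ≤ a k) (Sa : Summable a)
    (S1 : Summable fun n : ℕ => (n : ℝ) * a n)
    (S2 : Summable fun n : ℕ => (n : ℝ) * ((n : ℝ) - 1) * a n)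
    {p Q : ℝ} (hp0 : 0 < p) (hp1 : p ≤ 1) (hq0 : 0 ≤ Q) (hq1 : Q < 1) :
    deriv (deriv (pgfhat a p Q)) 0 = (1 - Q) * deriv (deriv (pgfp a p)) Q := by
  have ht : p * Q + (1 - p) ∈ Ioo (-1 : ℝ) 1 := by
    constructor
    · nlinarith [mul_nonneg (le_of_lt hp0) hq0]
    · nlinarith
  set c := p * (1 - Q) with hc
  set d := p * Q + (1 - p) with hd
  have hcd : ∀ s : ℝ, p * ((1 - Q) * s + Q) + (1 - p) = c * s + d := fun s => by
    rw [hc, hd]; ring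
  have hQne : (1 - Q) ≠ 0 := by linarith
  have hhat : pgfhat a p Q = fun s => (pgf a (c * s + d) - Q) / (1 - Q) := by
    funext s
    unfold pgfhat pgfp
    rw [show p * ((1 - Q) * s + Q) + 1 - p = p * ((1 - Q) * s + Q) + (1 - p) from by ring, hcd s]
  have hcont : Continuous fun s : ℝ => c * s + d := by continuity
  have hopen : IsOpen ((fun s : ℝ => c * s + d) ⁻¹' Ioo (-1 : ℝ) 1) := isOpen_Ioo.preimage hcont
  have h0mem : (0 : ℝ) ∈ (fun s : ℝ => c * s + d) ⁻¹' Ioo (-1 : ℝ) 1 := by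
    simp only [mem_preimage, mul_zero, zero_add]
    exact ht
  rw [hhat]
  have hev : deriv (fun s => (pgf a (c * s + d) - Q) / (1 - Q))
      =ᶠ[𝓝 (0 : ℝ)] fun s => c * pgfD1 a (c * s + d) / (1 - Q) := by
    filter_upwards [hopen.mem_nhds h0mem] with s hs
    exact (((comp_affine (hasDerivAt_pgf ha0 Sa S1 hs)).sub_const Q).div_const (1 - Q)).deriv
  rw [hev.deriv_eq]
  have h2 : HasDerivAt (fun s => c * pgfD1 a (c * s + d) / (1 - Q))
      (c * (c * pgfD2 a (c * 0 + d)) / (1 - Q)) 0 :=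
    ((comp_affine (hasDerivAt_pgfD1 ha0 S1 S2 (by simpa using h0mem))).const_mul c).div_const (1 - Q)
  rw [h2.deriv]
  have hderiv2 : deriv (deriv (pgfp a p)) Q = p ^ 2 * pgfD2 a (p * Q + (1 - p)) :=
    deriv2_pgfp ha0 Sa S1 S2 ht
  rw [hderiv2]
  rw [show c * 0 + d = d from by ring, hc, hd]
  field_simp

set_option maxHeartbeats 1000000 in
/-- As `p ↓ p_c`, `(1 - q_p)·f_p''(q_p)/(p - p_c) → 2m₁`; that is, the backbone
generating function satisfies `f̂_p''(0) = (1 - q_p) f_p''(q_p) = 2m₁(p - p_c)(1 + o(1))`. -/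
theorem backbone_second_deriv_asymptotics
    (a : ℕ → ℝ) (m₁ m₂ m₃ pc : ℝ) (q : ℝ → ℝ)
    (ha0 : ∀ k, 0 ≤ a k) (ha1 : HasSum a 1)
    (hm1 : HasSum (fun k : ℕ => (k : ℝ) * a k) m₁) (h1m : 1 < m₁)
    (hm2 : HasSum (fun k : ℕ => (k : ℝ) * ((k : ℝ) - 1) * a k) m₂)
    (hm3 : HasSum (fun k : ℕ => (k : ℝ) * ((k : ℝ) - 1) * ((k : ℝ) - 2) * a k) m₃)
    (hpc : pc = 1 / m₁)
    (hq : ∀ p ∈ Set.Ioc pc 1, q p ∈ Set.Ico (0 : ℝ) 1 ∧ pgfp a p (q p) = q p) :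
    (∀ p ∈ Set.Ioc pc 1,
      deriv (deriv (pgfhat a p (q p))) 0 = (1 - q p) * deriv (deriv (pgfp a p)) (q p)) ∧
    Tendsto (fun p => (1 - q p) * deriv (deriv (pgfp a p)) (q p) / (p - pc))
      (𝓝[>] pc) (𝓝 (2 * m₁)) := by
  have Sa : Summable a := ha1.summable
  have S1 : Summable fun n : ℕ => (n : ℝ) * a n := hm1.summable
  have S2 : Summable fun n : ℕ => (n : ℝ) * ((n : ℝ) - 1) * a n := hm2.summable
  have hm1pos : 0 < m₁ := by linarith
  have hpc0 : 0 < pc := by rw [hpc]; positivity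
  have hpc1 : pc < 1 := by rw [hpc, div_lt_one hm1pos]; exact h1m
  have hm2pos : 0 < m₂ := m2_pos ha0 ha1 hm1 h1m hm2
  have hm3nn : 0 ≤ m₃ := hm3.nonneg fun k => mul_nonneg (kk2 k) (ha0 k)
  have hmp : m₁ * pc = 1 := by rw [hpc]; field_simp
  constructor
  · intro p hp
    obtain ⟨⟨hq0, hq1⟩, _⟩ := hq p hp
    exact pgfhat_deriv2 ha0 Sa S1 S2 (hpc0.trans hp.1) hp.2 hq0 hq1
  -- the limit
  set l := 𝓝[>] pc with hl
  set u₀ : ℝ := min 1 (3 * m₂ / (2 * (m₃ + 1))) with hu₀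
  have hu₀pos : 0 < u₀ := lt_min one_pos (by positivity)
  have hu₀le1 : u₀ ≤ 1 := min_le_left _ _
  have hu₀m3 : m₃ * u₀ / 6 ≤ m₂ / 4 := by
    have h := min_le_right 1 (3 * m₂ / (2 * (m₃ + 1)))
    rw [le_div_iff₀ (by positivity : (0:ℝ) < 2 * (m₃ + 1))] at h
    linarith [hu₀pos]
  set C₁ : ℝ := 4 * m₁ / (m₂ * pc) with hC₁
  set c₂ : ℝ := m₃ * C₁ / (3 * m₂) with hc₂
  set κ : ℝ := m₁ - m₂ / 4 * u₀ with hκdef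
  have hκ : κ < m₁ := by
    have : 0 < m₂ / 4 * u₀ := by positivity
    rw [hκdef]; linarith
  have hev1 : ∀ᶠ p in l, p ∈ Ioc pc 1 := by
    rw [hl]
    exact Filter.eventually_iff.mpr (by exact Ioc_mem_nhdsGT_of_mem ⟨le_refl pc, hpc1⟩)
  have hinv : Tendsto (fun p : ℝ => 1 / p) l (𝓝 m₁) := by
    have h1 : Tendsto (fun p : ℝ => 1 / p) (𝓝 pc) (𝓝 (1 / pc)) :=
      tendsto_const_nhds.div tendsto_id (ne_of_gt hpc0)
    have h2 : (1 : ℝ) / pc = m₁ := by rw [hpc, one_div_one_div]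
    rw [h2] at h1
    exact h1.mono_left nhdsWithin_le_nhds
  have hev2 : ∀ᶠ p in l, κ < 1 / p := hinv.eventually (eventually_gt_nhds hκ)
  have hmain : ∀ᶠ p in l,
      (0 ≤ p * (1 - q p) ∧ p * (1 - q p) ≤ C₁ * (p - pc)) ∧
      (2 * m₁ / (m₂ * p) ≤ p * (1 - q p) / (p - pc) ∧
        p * (1 - q p) / (p - pc) ≤ 2 * m₁ / (m₂ * p) + c₂ * (p * (1 - q p))) ∧
      (m₂ - m₃ * (p * (1 - q p)) ≤ pgfD2 a (p * q p + (1 - p)) ∧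
        pgfD2 a (p * q p + (1 - p)) ≤ m₂) ∧
      ((1 - q p) * deriv (deriv (pgfp a p)) (q p) / (p - pc)
        = (p * (1 - q p) / (p - pc)) * (p * pgfD2 a (p * q p + (1 - p)))) := by
    filter_upwards [hev1, hev2] with p hIoc hκp
    obtain ⟨hppc, hp1⟩ := hIoc
    obtain ⟨⟨hq0, hq1⟩, hfix⟩ := hq p ⟨hppc, hp1⟩
    have hp0 : 0 < p := hpc0.trans hppc
    have hΔ : 0 < p - pc := sub_pos.2 hppc
    set Q := q p with hQ
    set U : ℝ := p * (1 - Q) with hU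
    set t : ℝ := p * Q + (1 - p) with ht
    have hU0 : 0 < U := mul_pos hp0 (by linarith)
    have hUle1 : U ≤ 1 := by rw [hU]; nlinarith
    have ht0 : 0 ≤ t := by rw [ht]; nlinarith [mul_nonneg hp0.le hq0]
    have ht1 : t < 1 := by rw [ht]; nlinarith
    have h1t : 1 - t = U := by rw [ht, hU]; ring
    have hfixt : pgf a t = Q := by
      have : pgfp a p Q = pgf a t := by unfold pgfp; rw [ht]; ring_nf
      rw [← this]; exact hfix
    have h1q : 1 - pgf a t = U / p := by
      rw [hfixt, hU]; field_simp
    have hmppc : m₁ * p - 1 = m₁ * (p - pc) := by rw [mul_sub, hmp]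
    have tl := taylor_low ha0 ha1 hm1 hm2 ht0 ht1.le
    have tu := taylor_up ha0 ha1 hm1 hm2 hm3 ht0 ht1.le
    rw [h1t, h1q] at tl tu
    rw [le_div_iff₀ hp0] at tl
    rw [div_le_iff₀ hp0] at tu
    -- tl : (m₁*U - m₂/2*U^2) * p ≤ U ; tu : U ≤ (m₁*U - m₂/2*U^2 + m₃/6*U^3) * p
    have hUu₀ : U < u₀ := by
      by_contra hcon
      push_neg at hcon
      have hch := chord_mono ha0 ha1 hu₀pos hcon hUle1
      rw [show (1 : ℝ) - U = t from by rw [ht, hU]; ring] at hch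
      rw [h1q] at hch
      rw [show U / p / U = 1 / p from by field_simp] at hch
      have tu0 := taylor_up ha0 ha1 hm1 hm2 hm3
        (by linarith : (0:ℝ) ≤ 1 - u₀) (by linarith : (1:ℝ) - u₀ ≤ 1)
      rw [show (1 : ℝ) - (1 - u₀) = u₀ from by ring] at tu0
      have hrhs : (1 - pgf a (1 - u₀)) / u₀ ≤ κ := by
        rw [div_le_iff₀ hu₀pos, hκdef]
        nlinarith [mul_le_mul_of_nonneg_right hu₀m3 (sq_nonneg u₀)]
      linarith
    have hm3U : m₃ * U / 6 ≤ m₂ / 4 := by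
      have := mul_le_mul_of_nonneg_left hUu₀.le hm3nn
      linarith
    -- upper bound on U
    have hUb : U * (m₂ * p) ≤ 4 * m₁ * (p - pc) := by
      have h3 : m₃ * U / 6 * (U ^ 2 * p) ≤ m₂ / 4 * (U ^ 2 * p) :=
        mul_le_mul_of_nonneg_right hm3U (by positivity)
      have h4 : (m₂ / 4 * U * p) * U ≤ (m₁ * (p - pc)) * U := by nlinarith
      have h5 := le_of_mul_le_mul_right h4 hU0
      nlinarith [mul_le_mul_of_nonneg_left hppc.le (mul_nonneg hU0.le hm2pos.le)]
    have hUC₁ : U ≤ C₁ * (p - pc) := by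
      rw [hC₁, show 4 * m₁ / (m₂ * pc) * (p - pc) = 4 * m₁ * (p - pc) / (m₂ * pc) from by ring,
        le_div_iff₀ (by positivity : (0:ℝ) < m₂ * pc)]
      calc U * (m₂ * pc) ≤ U * (m₂ * p) := by
            nlinarith [mul_le_mul_of_nonneg_left hppc.le (mul_nonneg hU0.le hm2pos.le)]
        _ ≤ 4 * m₁ * (p - pc) := hUb
    refine ⟨⟨hU0.le, hUC₁⟩, ⟨?_, ?_⟩, ⟨?_, ?_⟩, ?_⟩
    · rw [div_le_div_iff₀ (by positivity) hΔ]
      have h4 : (2 * m₁ * (p - pc)) * U ≤ (U * (m₂ * p)) * U := by nlinarith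
      exact le_of_mul_le_mul_right h4 hU0
    · have key : (m₂ / 2 * U * p) * U ≤ (m₁ * (p - pc) + m₃ / 6 * U ^ 2 * p) * U := by nlinarith
      have key2 := le_of_mul_le_mul_right key hU0
      have hU2 : U * U ≤ U * (C₁ * (p - pc)) := mul_le_mul_of_nonneg_left hUC₁ hU0.le
      rw [div_le_iff₀ hΔ]
      have hexp : (2 * m₁ / (m₂ * p) + c₂ * U) * (p - pc) * (m₂ * p)
          = 2 * m₁ * (p - pc) + m₃ * C₁ / 3 * U * (p - pc) * p := by
        rw [hc₂]; field_simp
      have hfin : U * (m₂ * p) ≤ (2 * m₁ / (m₂ * p) + c₂ * U) * (p - pc) * (m₂ * p) := by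
        rw [hexp]
        nlinarith [key2, mul_le_mul_of_nonneg_right hU2 (mul_nonneg hm3nn hp0.le)]
      exact le_of_mul_le_mul_right hfin (by positivity)
    · have := pgfD2_ge ha0 hm2 hm3 ht0 ht1.le
      rw [h1t] at this
      exact this
    · exact pgfD2_le ha0 hm2 ht0 ht1.le
    · have hD := deriv2_pgfp ha0 Sa S1 S2 (show p * Q + (1 - p) ∈ Ioo (-1:ℝ) 1 from by
        rw [← ht]; exact ⟨by linarith, ht1⟩)
      rw [← ht] at hD
      rw [hD, hU]
      field_simp
  -- limits
  have hΔtend : Tendsto (fun p : ℝ => p - pc) l (𝓝 0) := by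
    have : Tendsto (fun p : ℝ => p - pc) (𝓝 pc) (𝓝 (pc - pc)) :=
      tendsto_id.sub tendsto_const_nhds
    rw [sub_self] at this
    exact this.mono_left nhdsWithin_le_nhds
  have hu_tend : Tendsto (fun p => p * (1 - q p)) l (𝓝 0) := by
    refine tendsto_of_tendsto_of_tendsto_of_le_of_le' tendsto_const_nhds
      (by simpa using tendsto_const_nhds.mul hΔtend : Tendsto (fun p => C₁ * (p - pc)) l (𝓝 0))
      (hmain.mono fun p h => h.1.1) (hmain.mono fun p h => h.1.2)
  have hlow : Tendsto (fun p : ℝ => 2 * m₁ / (m₂ * p)) l (𝓝 (2 * m₁ / (m₂ * pc))) := by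
    have : Tendsto (fun p : ℝ => 2 * m₁ / (m₂ * p)) (𝓝 pc) (𝓝 (2 * m₁ / (m₂ * pc))) :=
      tendsto_const_nhds.div (tendsto_const_nhds.mul tendsto_id)
        (by positivity : (0:ℝ) < m₂ * pc).ne'
    exact this.mono_left nhdsWithin_le_nhds
  have hr_tend : Tendsto (fun p => p * (1 - q p) / (p - pc)) l (𝓝 (2 * m₁ / (m₂ * pc))) := by
    refine tendsto_of_tendsto_of_tendsto_of_le_of_le' hlow
      (by simpa using hlow.add (tendsto_const_nhds.mul hu_tend) :
        Tendsto (fun p => 2 * m₁ / (m₂ * p) + c₂ * (p * (1 - q p))) l (𝓝 (2 * m₁ / (m₂ * pc))))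
      (hmain.mono fun p h => h.2.1.1) (hmain.mono fun p h => h.2.1.2)
  have hf2_tend : Tendsto (fun p => pgfD2 a (p * q p + (1 - p))) l (𝓝 m₂) := by
    refine tendsto_of_tendsto_of_tendsto_of_le_of_le'
      (by simpa using tendsto_const_nhds.sub (tendsto_const_nhds.mul hu_tend) :
        Tendsto (fun p => m₂ - m₃ * (p * (1 - q p))) l (𝓝 m₂))
      tendsto_const_nhds
      (hmain.mono fun p h => h.2.2.1.1) (hmain.mono fun p h => h.2.2.1.2)
  have hp_tend : Tendsto (fun p : ℝ => p) l (𝓝 pc) := tendsto_id.mono_left nhdsWithin_le_nhds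
  have final0 := hr_tend.mul (hp_tend.mul hf2_tend)
  have hval : 2 * m₁ / (m₂ * pc) * (pc * m₂) = 2 * m₁ := by
    field_simp
  rw [hval] at final0
  exact final0.congr' (hmain.mono fun p h => (h.2.2.2).symm)
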